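/- Let p = 1 and let the chain USD_1 be started from the configuration with X₁(0) = 1, X₂(0) = n−1 and U(0) = 0. Let T = inf{t ≥ 0 : X₂(t) = 0}. Then Pr[T ≤ 7·n²·log² n] ≥ 1 − n^{-2}. -/

import Mathlib

open MeasureTheory

/-- The one-step transition probability of the stubborn undecided-state dynamics `USD_p`
with `n` agents, from configuration `c = (x₁, x₂, u)` to configuration `d`. -/
noncomputable def usdStep (n : ℕ) (p : ℝ) (c d : ℕ × ℕ × ℕ) : ℝ :=
  (if d = (c.1 - 1, c.2.1, c.2.2 + 1) then (1 - p) * (c.1 : ℝ) * (c.2.1 : ℝ) / (n : ℝ) ^ 2 else 0) +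
  (if d = (c.1, c.2.1 - 1, c.2.2 + 1) then (c.1 : ℝ) * (c.2.1 : ℝ) / (n : ℝ) ^ 2 else 0) +
  (if d = (c.1 + 1, c.2.1, c.2.2 - 1) then (c.2.2 : ℝ) * (c.1 : ℝ) / (n : ℝ) ^ 2 else 0) +
  (if d = (c.1, c.2.1 + 1, c.2.2 - 1) then (c.2.2 : ℝ) * (c.2.1 : ℝ) / (n : ℝ) ^ 2 else 0) +
  (if d = c then
    1 - ((2 - p) * (c.1 : ℝ) * (c.2.1 : ℝ) + (c.2.2 : ℝ) * ((c.1 : ℝ) + (c.2.1 : ℝ))) / (n : ℝ) ^ 2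
  else 0)

/-- `μ` is the law of the trajectory `(X(t))_{t ≥ 0}` of `USD_p` with `n` agents started
from the configuration `x0`: it is a probability measure on paths whose finite-dimensional
cylinder probabilities are the products of the one-step transition probabilities. -/
def IsUSD (n : ℕ) (p : ℝ) (x0 : ℕ × ℕ × ℕ) (μ : Measure (ℕ → ℕ × ℕ × ℕ)) : Prop :=
  IsProbabilityMeasure μ ∧
  ∀ (t : ℕ) (seq : ℕ → ℕ × ℕ × ℕ),
    (μ {ω | ∀ i ≤ t, ω i = seq i}).toReal =
      (if seq 0 = x0 then (1 : ℝ) else 0) *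
        ∏ i ∈ Finset.range t, usdStep n p (seq i) (seq (i + 1))

/-- The weighted bias `Δ_w = x₁ - (1 - p)·x₂` of a configuration. -/
noncomputable def dw (p : ℝ) (c : ℕ × ℕ × ℕ) : ℝ := (c.1 : ℝ) - (1 - p) * (c.2.1 : ℝ)

namespace S18


def Sfin (n : ℕ) : Finset (ℕ × ℕ × ℕ) :=
  ((Finset.range (n+1)) ×ˢ (Finset.range (n+1)) ×ˢ (Finset.range (n+1))).filter
    (fun c => c.1 + c.2.1 + c.2.2 = n ∧ 1 ≤ c.1)

lemma mem_Sfin {n : ℕ} {c : ℕ × ℕ × ℕ} :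
    c ∈ Sfin n ↔ c.1 + c.2.1 + c.2.2 = n ∧ 1 ≤ c.1 := by
  obtain ⟨a, b, u⟩ := c
  simp only [Sfin, Finset.mem_filter, Finset.mem_product, Finset.mem_range]
  constructor
  · rintro ⟨-, h⟩; exact h
  · rintro ⟨h1, h2⟩; exact ⟨⟨by omega, by omega, by omega⟩, h1, h2⟩

noncomputable def pf (b : ℝ) (c : ℕ × ℕ × ℕ) : ℝ :=
  if c.2.1 = 0 then 0 else b ^ c.2.1 / (c.1 : ℝ)

lemma pf_nonneg {b : ℝ} (hb : 0 ≤ b) (c : ℕ × ℕ × ℕ) : 0 ≤ pf b c := by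
  unfold pf; split
  · exact le_refl 0
  · positivity

lemma usdStep_nonneg {n : ℕ} (hn : 2 ≤ n) {c : ℕ × ℕ × ℕ} (hc : c ∈ Sfin n)
    (d : ℕ × ℕ × ℕ) : 0 ≤ usdStep n 1 c d := by
  obtain ⟨hsum, hx1⟩ := mem_Sfin.1 hc
  obtain ⟨a, b, u⟩ := c
  have hn0 : (0:ℝ) < (n:ℝ)^2 := by positivity
  unfold usdStep
  have key : ((2:ℝ) - 1) * a * b + (u:ℝ) * ((a:ℝ) + b) ≤ (n:ℝ)^2 := by
    have : (a:ℝ) + b + u = n := by exact_mod_cast hsum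
    nlinarith [Nat.cast_nonneg (α := ℝ) a, Nat.cast_nonneg (α := ℝ) b,
      Nat.cast_nonneg (α := ℝ) u]
  simp only at *
  repeat' apply add_nonneg
  all_goals split
  all_goals try positivity
  norm_num
  rw [div_le_one hn0]
  nlinarith [key]



def tA (c : ℕ × ℕ × ℕ) : ℕ × ℕ × ℕ := (c.1, c.2.1 - 1, c.2.2 + 1)
def tB (c : ℕ × ℕ × ℕ) : ℕ × ℕ × ℕ := (c.1 + 1, c.2.1, c.2.2 - 1)
def tC (c : ℕ × ℕ × ℕ) : ℕ × ℕ × ℕ := (c.1, c.2.1 + 1, c.2.2 - 1)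

lemma sum_usdStep_mul (n : ℕ) (c : ℕ × ℕ × ℕ) (F : ℕ × ℕ × ℕ → ℝ) :
    ∑ d ∈ Sfin n, usdStep n 1 c d * F d =
      (if tA c ∈ Sfin n then (c.1 : ℝ) * (c.2.1 : ℝ) / (n : ℝ) ^ 2 * F (tA c) else 0) +
      (if tB c ∈ Sfin n then (c.2.2 : ℝ) * (c.1 : ℝ) / (n : ℝ) ^ 2 * F (tB c) else 0) +
      (if tC c ∈ Sfin n then (c.2.2 : ℝ) * (c.2.1 : ℝ) / (n : ℝ) ^ 2 * F (tC c) else 0) +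
      (if c ∈ Sfin n then
        (1 - ((2 - 1) * (c.1 : ℝ) * (c.2.1 : ℝ) + (c.2.2 : ℝ) * ((c.1 : ℝ) + (c.2.1 : ℝ)))
          / (n : ℝ) ^ 2) * F c else 0) := by
  unfold usdStep tA tB tC
  simp only [add_mul, ite_mul, zero_mul, Finset.sum_add_distrib]
  rw [Finset.sum_ite_eq' (Sfin n) ((c.1, c.2.1 - 1, c.2.2 + 1) : ℕ × ℕ × ℕ),
    Finset.sum_ite_eq' (Sfin n) ((c.1 + 1, c.2.1, c.2.2 - 1) : ℕ × ℕ × ℕ),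
    Finset.sum_ite_eq' (Sfin n) ((c.1, c.2.1 + 1, c.2.2 - 1) : ℕ × ℕ × ℕ),
    Finset.sum_ite_eq' (Sfin n) c,
    Finset.sum_ite_eq' (Sfin n) ((c.1 - 1, c.2.1, c.2.2 + 1) : ℕ × ℕ × ℕ)]
  have : (if ((c.1 - 1, c.2.1, c.2.2 + 1) : ℕ × ℕ × ℕ) ∈ Sfin n then
      (1 - 1) * (c.1 : ℝ) * (c.2.1 : ℝ) / (n : ℝ) ^ 2 * F (c.1 - 1, c.2.1, c.2.2 + 1) else 0)
      = 0 := by split <;> norm_num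
  rw [this]
  ring

lemma stay_nonneg {n : ℕ} (hn : 2 ≤ n) {x y u : ℕ} (hc : (x,y,u) ∈ Sfin n) :
    0 ≤ 1 - ((x : ℝ) * (y : ℝ) + (u : ℝ) * ((x : ℝ) + (y : ℝ))) / (n : ℝ) ^ 2 := by
  obtain ⟨hsum, hx⟩ := mem_Sfin.1 hc
  have hN : (x : ℝ) + y + u = n := by exact_mod_cast hsum
  have hn2 : (0:ℝ) < (n:ℝ)^2 := by positivity
  rw [sub_nonneg, div_le_one hn2]
  nlinarith [Nat.cast_nonneg (α := ℝ) x, Nat.cast_nonneg (α := ℝ) y,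
    Nat.cast_nonneg (α := ℝ) u]

set_option maxHeartbeats 1000000 in
lemma pf_step {n : ℕ} (hn : 2 ≤ n) {c : ℕ × ℕ × ℕ} (hc : c ∈ Sfin n) :
    ∑ d ∈ Sfin n, usdStep n 1 c d * pf ((2*(n:ℝ)+1)/(2*(n:ℝ))) d
      ≤ (1 - ((n:ℝ)-1)/((2*(n:ℝ)+1)*(n:ℝ)^2)) * pf ((2*(n:ℝ)+1)/(2*(n:ℝ))) c := by
  obtain ⟨x, y, u⟩ := c
  obtain ⟨hsum, hx⟩ := mem_Sfin.1 hc
  have hN2 : (2:ℝ) ≤ (n:ℝ) := by exact_mod_cast hn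
  have hNpos : (0:ℝ) < (n:ℝ) := by linarith
  set N := (n:ℝ) with hNdef
  set b := (2*N+1)/(2*N) with hbdef
  have hb1 : 1 < b := by rw [hbdef, lt_div_iff₀ (by linarith)]; linarith
  have hb0 : 0 < b := by linarith
  rw [sum_usdStep_mul]
  dsimp only
  rw [← hNdef]
  have hX : (1:ℝ) ≤ (x:ℝ) := by exact_mod_cast hx
  have hX0 : (0:ℝ) < (x:ℝ) := by linarith
  have hY0 : (0:ℝ) ≤ (y:ℝ) := Nat.cast_nonneg y
  have hU0 : (0:ℝ) ≤ (u:ℝ) := Nat.cast_nonneg u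
  have hsumR : (x:ℝ) + y + u = N := by
    have h := hsum; simp only at h; rw [hNdef]; exact_mod_cast h
  rcases Nat.eq_zero_or_pos y with hy | hy
  · subst hy
    have h1 : pf b (x, 0, u) = 0 := by simp [pf]
    have h2 : pf b (tB (x, 0, u)) = 0 := by simp [pf, tB]
    rw [h1, h2]
    simp only [tA, tB, tC, Nat.cast_zero]
    norm_num
  · -- main case
    have hY1 : (1:ℝ) ≤ (y:ℝ) := by exact_mod_cast hy
    set s := b ^ y with hsdef
    have hs : 0 < s := pow_pos hb0 y
    have hsb : b ^ (y - 1) * b = s := by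
      rw [hsdef, ← pow_succ]; congr 1; omega
    have hpfc : pf b (x, y, u) = s / (x:ℝ) := by
      simp only [pf]; rw [if_neg (by omega)]
    -- bounds on the four terms
    have hA : (if tA (x,y,u) ∈ Sfin n then
        (x : ℝ) * (y : ℝ) / N ^ 2 * pf b (tA (x,y,u)) else 0)
        ≤ (x : ℝ) * (y : ℝ) / N ^ 2 * (s / (b * (x:ℝ))) := by
      have hpfA : pf b (tA (x,y,u)) ≤ s / (b * (x:ℝ)) := by
        dsimp only [pf, tA]
        split
        · positivity
        · rw [div_le_div_iff₀ hX0 (by positivity)]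
          calc b ^ (y-1) * (b * (x:ℝ)) = (b^(y-1) * b) * x := by ring
          _ = s * x := by rw [hsb]
          _ ≤ s * x := le_refl _
      split
      · exact mul_le_mul_of_nonneg_left hpfA (by positivity)
      · positivity
    have hB : (if tB (x,y,u) ∈ Sfin n then
        (u : ℝ) * (x : ℝ) / N ^ 2 * pf b (tB (x,y,u)) else 0)
        ≤ (u : ℝ) * (x : ℝ) / N ^ 2 * (s / ((x:ℝ)+1)) := by
      have hpfB : pf b (tB (x,y,u)) ≤ s / ((x:ℝ)+1) := by
        dsimp only [pf, tB]
        rw [if_neg (by omega)]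
        rw [Nat.cast_add, Nat.cast_one]
      split
      · exact mul_le_mul_of_nonneg_left hpfB (by positivity)
      · positivity
    have hC : (if tC (x,y,u) ∈ Sfin n then
        (u : ℝ) * (y : ℝ) / N ^ 2 * pf b (tC (x,y,u)) else 0)
        ≤ (u : ℝ) * (y : ℝ) / N ^ 2 * (s * b / (x:ℝ)) := by
      have hpfC : pf b (tC (x,y,u)) ≤ s * b / (x:ℝ) := by
        dsimp only [pf, tC]
        rw [if_neg (by omega)]
        rw [pow_succ]
      split
      · exact mul_le_mul_of_nonneg_left hpfC (by positivity)
      · positivity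
    have hD : (if (x,y,u) ∈ Sfin n then
        (1 - ((2 - 1) * (x : ℝ) * (y : ℝ) + (u : ℝ) * ((x : ℝ) + (y : ℝ))) / N ^ 2)
          * (s / (x:ℝ)) else 0)
        ≤ (1 - ((x : ℝ) * (y : ℝ) + (u : ℝ) * ((x : ℝ) + (y : ℝ))) / N ^ 2) * (s / (x:ℝ)) := by
      rw [if_pos hc]
      have : ((2:ℝ) - 1) * (x : ℝ) * (y : ℝ) = (x:ℝ) * y := by ring
      rw [this]
    have key : 2*N*((x:ℝ)+1)*(x:ℝ)*(y:ℝ) + 2*N*(2*N+1)*(u:ℝ)*(x:ℝ)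
        ≥ (2*N+1)*((x:ℝ)+1)*(u:ℝ)*(y:ℝ) + 2*N*((x:ℝ)+1)*(N-1) := by
      rcases Nat.eq_zero_or_pos u with hu | hu
      · subst hu
        simp only [Nat.cast_zero] at hsumR ⊢
        have hp : (0:ℝ) ≤ ((x:ℝ) - 1) * ((y:ℝ) - 1) :=
          mul_nonneg (by linarith) (by linarith)
        have hNN : N*((x:ℝ)+1)*(N-1) = N*((x:ℝ)+1)*((x:ℝ)+(y:ℝ)-1) := by
          rw [← hsumR]; ring
        nlinarith [mul_nonneg (mul_nonneg (by linarith : (0:ℝ) ≤ 2*N)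
          (by linarith : (0:ℝ) ≤ (x:ℝ)+1)) hp, hNN]
      · have hU1 : (1:ℝ) ≤ (u:ℝ) := by exact_mod_cast hu
        rw [show N = (x:ℝ)+(y:ℝ)+(u:ℝ) from hsumR.symm]
        nlinarith [mul_nonneg (sub_nonneg.2 hX) (sub_nonneg.2 hY1),
          mul_nonneg (sub_nonneg.2 hX) (sub_nonneg.2 hU1),
          mul_nonneg (sub_nonneg.2 hY1) (sub_nonneg.2 hU1),
          sq_nonneg ((x:ℝ)-1), sq_nonneg ((y:ℝ)-1), sq_nonneg ((u:ℝ)-1),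
          mul_nonneg (mul_nonneg (sub_nonneg.2 hX) (sub_nonneg.2 hY1)) (sub_nonneg.2 hU1),
          mul_nonneg (mul_nonneg (sub_nonneg.2 hX) (sub_nonneg.2 hX)) (sub_nonneg.2 hU1),
          mul_nonneg (mul_nonneg (sub_nonneg.2 hU1) (sub_nonneg.2 hU1)) (sub_nonneg.2 hX)]
    have final : (x : ℝ) * (y : ℝ) / N ^ 2 * (s / (b * (x:ℝ)))
        + (u : ℝ) * (x : ℝ) / N ^ 2 * (s / ((x:ℝ)+1))
        + (u : ℝ) * (y : ℝ) / N ^ 2 * (s * b / (x:ℝ))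
        + (1 - ((x : ℝ) * (y : ℝ) + (u : ℝ) * ((x : ℝ) + (y : ℝ))) / N ^ 2) * (s / (x:ℝ))
        ≤ (1 - (N-1)/((2*N+1)*N^2)) * (s / (x:ℝ)) := by
      have hNne : N ≠ 0 := ne_of_gt hNpos
      have hxne : (x:ℝ) ≠ 0 := ne_of_gt hX0
      have hx1ne : ((x:ℝ)+1) ≠ 0 := by positivity
      have h2N1ne : (2*N+1) ≠ 0 := by positivity
      have hDpos : (0:ℝ) < N^2*(2*N)*(2*N+1)*(x:ℝ)*((x:ℝ)+1) := by positivity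
      have diff : (1 - (N-1)/((2*N+1)*N^2)) * (s / (x:ℝ))
          - ((x : ℝ) * (y : ℝ) / N ^ 2 * (s / (b * (x:ℝ)))
            + (u : ℝ) * (x : ℝ) / N ^ 2 * (s / ((x:ℝ)+1))
            + (u : ℝ) * (y : ℝ) / N ^ 2 * (s * b / (x:ℝ))
            + (1 - ((x : ℝ) * (y : ℝ) + (u : ℝ) * ((x : ℝ) + (y : ℝ))) / N ^ 2) * (s / (x:ℝ)))
          = s * ((2*N*((x:ℝ)+1)*(x:ℝ)*(y:ℝ) + 2*N*(2*N+1)*(u:ℝ)*(x:ℝ))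
              - ((2*N+1)*((x:ℝ)+1)*(u:ℝ)*(y:ℝ) + 2*N*((x:ℝ)+1)*(N-1)))
            / (N^2*(2*N)*(2*N+1)*(x:ℝ)*((x:ℝ)+1)) := by
        rw [hbdef]
        field_simp
        ring
      have hnn : (0:ℝ) ≤ s * ((2*N*((x:ℝ)+1)*(x:ℝ)*(y:ℝ) + 2*N*(2*N+1)*(u:ℝ)*(x:ℝ))
              - ((2*N+1)*((x:ℝ)+1)*(u:ℝ)*(y:ℝ) + 2*N*((x:ℝ)+1)*(N-1)))
            / (N^2*(2*N)*(2*N+1)*(x:ℝ)*((x:ℝ)+1)) :=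
        div_nonneg (mul_nonneg hs.le (sub_nonneg.2 key)) hDpos.le
      linarith [diff, hnn]
    rw [hpfc]
    linarith [hA, hB, hC, hD, final]

lemma row_sum {n : ℕ} (hn : 2 ≤ n) {c : ℕ × ℕ × ℕ} (hc : c ∈ Sfin n) :
    ∑ d ∈ Sfin n, usdStep n 1 c d = 1 := by
  obtain ⟨x, y, u⟩ := c
  obtain ⟨hsum, hx⟩ := mem_Sfin.1 hc
  simp only at hsum hx
  have h := sum_usdStep_mul n (x, y, u) (fun _ => 1)
  simp only [mul_one] at h
  rw [h]
  have hNpos : (0:ℝ) < (n:ℝ)^2 := by positivity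
  have eA : (if tA (x,y,u) ∈ Sfin n then (x : ℝ) * (y : ℝ) / (n:ℝ) ^ 2 else 0)
      = (x : ℝ) * (y : ℝ) / (n:ℝ) ^ 2 := by
    rcases Nat.eq_zero_or_pos y with hy | hy
    · subst hy; simp
    · rw [if_pos (mem_Sfin.2 (by simp [tA]; omega))]
  have eB : (if tB (x,y,u) ∈ Sfin n then (u : ℝ) * (x : ℝ) / (n:ℝ) ^ 2 else 0)
      = (u : ℝ) * (x : ℝ) / (n:ℝ) ^ 2 := by
    rcases Nat.eq_zero_or_pos u with hu | hu
    · subst hu; simp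
    · rw [if_pos (mem_Sfin.2 (by simp [tB]; omega))]
  have eC : (if tC (x,y,u) ∈ Sfin n then (u : ℝ) * (y : ℝ) / (n:ℝ) ^ 2 else 0)
      = (u : ℝ) * (y : ℝ) / (n:ℝ) ^ 2 := by
    rcases Nat.eq_zero_or_pos u with hu | hu
    · subst hu; simp
    · rw [if_pos (mem_Sfin.2 (by simp [tC]; omega))]
  rw [eA, eB, eC, if_pos hc]
  have hne : ((n:ℝ))^2 ≠ 0 := ne_of_gt hNpos
  field_simp
  ring

def extend {t : ℕ} (g : Fin (t+1) → ℕ × ℕ × ℕ) : ℕ → ℕ × ℕ × ℕ :=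
  fun i => g ⟨min i t, Nat.lt_succ_of_le (Nat.min_le_right i t)⟩

lemma extend_eq {t : ℕ} (g : Fin (t+1) → ℕ × ℕ × ℕ) (i : ℕ) (h : i ≤ t) :
    extend g i = g ⟨i, Nat.lt_succ_of_le h⟩ := by
  unfold extend
  congr 1
  exact Fin.ext (by simp [Nat.min_eq_left h])

lemma extend_zero {t : ℕ} (g : Fin (t+1) → ℕ × ℕ × ℕ) : extend g 0 = g 0 := by
  rw [extend_eq g 0 (Nat.zero_le t)]
  congr 1

lemma extend_mem {n t : ℕ} {g : Fin (t+1) → ℕ × ℕ × ℕ}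
    (hg : g ∈ Fintype.piFinset (fun _ : Fin (t+1) => Sfin n)) (i : ℕ) :
    extend g i ∈ Sfin n := by
  rw [Fintype.mem_piFinset] at hg
  exact hg _

noncomputable def wgt (n : ℕ) (x0 : ℕ × ℕ × ℕ) {t : ℕ} (g : Fin (t+1) → ℕ × ℕ × ℕ) : ℝ :=
  (if extend g 0 = x0 then (1:ℝ) else 0) *
    ∏ i ∈ Finset.range t, usdStep n 1 (extend g i) (extend g (i+1))

lemma wgt_nonneg {n : ℕ} (hn : 2 ≤ n) (x0 : ℕ × ℕ × ℕ) {t : ℕ}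
    {g : Fin (t+1) → ℕ × ℕ × ℕ}
    (hg : g ∈ Fintype.piFinset (fun _ : Fin (t+1) => Sfin n)) :
    0 ≤ wgt n x0 g := by
  apply mul_nonneg
  · split <;> norm_num
  · exact Finset.prod_nonneg fun i _ => usdStep_nonneg hn (extend_mem hg i) _

noncomputable def PS (n : ℕ) (x0 : ℕ × ℕ × ℕ) (t : ℕ) (F : ℕ × ℕ × ℕ → ℝ) : ℝ :=
  ∑ g ∈ Fintype.piFinset (fun _ : Fin (t+1) => Sfin n), wgt n x0 g * F (extend g t)

lemma PS_zero {n : ℕ} {x0 : ℕ × ℕ × ℕ} (hx0 : x0 ∈ Sfin n) (F : ℕ × ℕ × ℕ → ℝ) :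
    PS n x0 0 F = F x0 := by
  rw [PS]
  rw [Finset.sum_eq_single (fun _ : Fin 1 => x0)]
  · simp [wgt, extend]
  · intro g hg hne
    have h0 : extend g 0 = g 0 := extend_zero g
    have : g 0 ≠ x0 := by
      intro h
      apply hne
      funext i
      have : i = 0 := Subsingleton.elim i 0
      rw [this, h]
    rw [wgt, if_neg (by rw [h0]; exact this)]
    ring
  · intro h
    exfalso
    apply h
    rw [Fintype.mem_piFinset]
    intro _
    exact hx0

lemma PS_congr {n : ℕ} {x0 : ℕ × ℕ × ℕ} {t : ℕ} {F G : ℕ × ℕ × ℕ → ℝ}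
    (h : ∀ c ∈ Sfin n, F c = G c) : PS n x0 t F = PS n x0 t G :=
  Finset.sum_congr rfl fun g hg => by rw [h _ (extend_mem hg t)]

lemma PS_mono {n : ℕ} (hn : 2 ≤ n) {x0 : ℕ × ℕ × ℕ} {t : ℕ} {F G : ℕ × ℕ × ℕ → ℝ}
    (h : ∀ c ∈ Sfin n, F c ≤ G c) : PS n x0 t F ≤ PS n x0 t G :=
  Finset.sum_le_sum fun g hg =>
    mul_le_mul_of_nonneg_left (h _ (extend_mem hg t)) (wgt_nonneg hn x0 hg)

lemma PS_smul {n : ℕ} {x0 : ℕ × ℕ × ℕ} {t : ℕ} (K : ℝ) (F : ℕ × ℕ × ℕ → ℝ) :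
    PS n x0 t (fun c => K * F c) = K * PS n x0 t F := by
  rw [PS, PS, Finset.mul_sum]
  exact Finset.sum_congr rfl fun g _ => by ring

lemma extend_compCastSucc {t : ℕ} (h : Fin (t+2) → ℕ × ℕ × ℕ) (i : ℕ) (hi : i ≤ t) :
    extend (fun j : Fin (t+1) => h j.castSucc) i = extend h i := by
  rw [extend_eq _ i hi, extend_eq h i (by omega)]
  congr 1

lemma PS_succ (n : ℕ) (x0 : ℕ × ℕ × ℕ) (t : ℕ) (F : ℕ × ℕ × ℕ → ℝ) :
    PS n x0 (t+1) F = PS n x0 t (fun c => ∑ a ∈ Sfin n, usdStep n 1 c a * F a) := by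
  rw [PS, PS]
  have : ∀ g ∈ Fintype.piFinset (fun _ : Fin (t+1) => Sfin n),
      wgt n x0 g * ∑ a ∈ Sfin n, usdStep n 1 (extend g t) a * F a
      = ∑ a ∈ Sfin n, wgt n x0 g * (usdStep n 1 (extend g t) a * F a) :=
    fun g _ => Finset.mul_sum _ _ _
  rw [Finset.sum_congr rfl this, ← Finset.sum_product']
  apply Finset.sum_nbij'
    (i := fun h => ((fun j : Fin (t+1) => h j.castSucc, h (Fin.last (t+1))) :
        (Fin (t+1) → ℕ × ℕ × ℕ) × (ℕ × ℕ × ℕ)))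
    (j := fun p => Fin.snoc p.1 p.2)
  · intro h hh
    rw [Fintype.mem_piFinset] at hh
    rw [Finset.mem_product]
    exact ⟨by rw [Fintype.mem_piFinset]; intro j; exact hh _, hh _⟩
  · intro p hp
    rw [Finset.mem_product] at hp
    obtain ⟨hp1, hp2⟩ := hp
    rw [Fintype.mem_piFinset] at hp1 ⊢
    intro j
    refine Fin.lastCases ?_ ?_ j
    · rw [Fin.snoc_last]; exact hp2
    · intro k; rw [Fin.snoc_castSucc]; exact hp1 k
  · intro h _
    funext j
    refine Fin.lastCases ?_ ?_ j
    · rw [Fin.snoc_last]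
    · intro k; rw [Fin.snoc_castSucc]
  · intro p _
    refine Prod.ext ?_ ?_
    · funext k
      simp [Fin.snoc_castSucc]
    · simp [Fin.snoc_last]
  · intro h hh
    have hlast : extend h (t+1) = h (Fin.last (t+1)) := by
      rw [extend_eq h (t+1) le_rfl]; rfl
    have hwgt : wgt n x0 h
        = wgt n x0 (fun j : Fin (t+1) => h j.castSucc)
          * usdStep n 1 (extend h t) (h (Fin.last (t+1))) := by
      rw [wgt, wgt, Finset.prod_range_succ]
      rw [extend_compCastSucc h 0 (Nat.zero_le t), ← hlast]
      rw [Finset.prod_congr rfl (fun i hi => ?_)]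
      · ring
      · have hi' : i < t := Finset.mem_range.1 hi
        rw [extend_compCastSucc h i (by omega), extend_compCastSucc h (i+1) (by omega)]
    rw [hlast, hwgt, extend_compCastSucc h t le_rfl]
    ring

lemma PS_one {n : ℕ} (hn : 2 ≤ n) {x0 : ℕ × ℕ × ℕ} (hx0 : x0 ∈ Sfin n) (t : ℕ) :
    PS n x0 t (fun _ => 1) = 1 := by
  induction t with
  | zero => rw [PS_zero hx0]
  | succ t ih =>
    rw [PS_succ]
    rw [PS_congr (G := fun _ => (1:ℝ)) (fun c hc => by
      simp only [mul_one]
      exact row_sum hn hc)]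
    exact ih

lemma PS_supermart {n : ℕ} (hn : 2 ≤ n) {x0 : ℕ × ℕ × ℕ} (hx0 : x0 ∈ Sfin n)
    {b δ : ℝ} (hδ : 0 ≤ 1 - δ)
    (hstep : ∀ c ∈ Sfin n, ∑ a ∈ Sfin n, usdStep n 1 c a * pf b a ≤ (1 - δ) * pf b c)
    (t : ℕ) : PS n x0 t (pf b) ≤ (1 - δ)^t * pf b x0 := by
  induction t with
  | zero => rw [PS_zero hx0]; simp
  | succ t ih =>
    rw [PS_succ]
    calc PS n x0 t (fun c => ∑ a ∈ Sfin n, usdStep n 1 c a * pf b a)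
        ≤ PS n x0 t (fun c => (1 - δ) * pf b c) := PS_mono hn hstep
      _ = (1 - δ) * PS n x0 t (pf b) := PS_smul _ _
      _ ≤ (1 - δ) * ((1 - δ)^t * pf b x0) := mul_le_mul_of_nonneg_left ih hδ
      _ = (1 - δ)^(t+1) * pf b x0 := by ring

lemma main_abstract (n : ℕ) (hn : 2 ≤ n) (b δ : ℝ) (hb : 1 ≤ b)
    (hδ0 : 0 ≤ 1 - δ)
    (hstep : ∀ c ∈ Sfin n, ∑ a ∈ Sfin n, usdStep n 1 c a * pf b a ≤ (1 - δ) * pf b c)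
    (t : ℕ) (ht : (t : ℝ) ≤ 7 * (n : ℝ) ^ 2 * (Real.log n) ^ 2)
    (hfinal : ((n:ℝ) - 1) / b * ((1 - δ)^t * b^(n-1)) ≤ ((n : ℝ)^2)⁻¹)
    (μ : Measure (ℕ → ℕ × ℕ × ℕ)) (hμ : IsUSD n 1 (1, n - 1, 0) μ) :
    1 - ((n : ℝ) ^ 2)⁻¹ ≤
      (μ {ω | ∃ s : ℕ, (s : ℝ) ≤ 7 * (n : ℝ) ^ 2 * (Real.log n) ^ 2 ∧ (ω s).2.1 = 0}).toReal := by
  have hprob : IsProbabilityMeasure μ := hμ.1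
  set x0 : ℕ × ℕ × ℕ := (1, n - 1, 0) with hx0def
  have hx0 : x0 ∈ Sfin n := mem_Sfin.2 (by constructor <;> simp [hx0def] <;> omega)
  have hb0 : (0:ℝ) < b := lt_of_lt_of_le one_pos hb
  -- the indicator functions
  set ind0 : ℕ × ℕ × ℕ → ℝ := fun c => if c.2.1 = 0 then 1 else 0 with hind0
  set ind1 : ℕ × ℕ × ℕ → ℝ := fun c => if c.2.1 = 0 then 0 else 1 with hind1
  set Good : Finset (Fin (t+1) → ℕ × ℕ × ℕ) :=
    (Fintype.piFinset (fun _ : Fin (t+1) => Sfin n)).filter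
      (fun g => (g (Fin.last t)).2.1 = 0) with hGood
  -- Step A : sum over Good = PS of ind0
  have hextlast : ∀ g : Fin (t+1) → ℕ × ℕ × ℕ, extend g t = g (Fin.last t) := by
    intro g; rw [extend_eq g t le_rfl]; rfl
  have hstepA : ∑ g ∈ Good, wgt n x0 g = PS n x0 t ind0 := by
    rw [hGood, Finset.sum_filter, PS]
    apply Finset.sum_congr rfl
    intro g _
    rw [hextlast g, hind0]
    by_cases h : (g (Fin.last t)).2.1 = 0 <;> simp [h]
  -- Step B : PS ind0 = 1 - PS ind1
  have hstepB : PS n x0 t ind0 = 1 - PS n x0 t ind1 := by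
    have e : PS n x0 t (fun c => 1 - ind1 c) = PS n x0 t (fun _ => 1) - PS n x0 t ind1 := by
      rw [PS, PS, PS, ← Finset.sum_sub_distrib]
      exact Finset.sum_congr rfl fun g _ => by ring
    have e2 : PS n x0 t ind0 = PS n x0 t (fun c => 1 - ind1 c) := by
      apply PS_congr
      intro c _
      rw [hind0, hind1]
      by_cases h : c.2.1 = 0 <;> simp [h]
    rw [e2, e, PS_one hn hx0]
  -- Step C : PS ind1 small
  have hK0 : (0:ℝ) ≤ ((n:ℝ) - 1) / b := by
    apply div_nonneg _ hb0.le
    have : (2:ℝ) ≤ (n:ℝ) := by exact_mod_cast hn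
    linarith
  have hstepC : PS n x0 t ind1 ≤ ((n:ℝ) - 1) / b * ((1 - δ)^t * b^(n-1)) := by
    have h1 : PS n x0 t ind1 ≤ PS n x0 t (fun c => ((n:ℝ) - 1) / b * pf b c) := by
      apply PS_mono hn
      rintro ⟨x, y, u⟩ hc
      obtain ⟨hsum, hx⟩ := mem_Sfin.1 hc
      simp only at hsum hx
      rw [hind1]
      by_cases hy : y = 0
      · simp only [hy, if_pos rfl]
        exact mul_nonneg hK0 (pf_nonneg hb0.le _)
      · simp only [if_neg hy]
        rw [pf]
        rw [if_neg hy]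
        have hy1 : 1 ≤ y := Nat.one_le_iff_ne_zero.2 hy
        have hxn : (x:ℝ) ≤ (n:ℝ) - 1 := by
          have : x + 1 ≤ n := by omega
          have : (x:ℝ) + 1 ≤ (n:ℝ) := by exact_mod_cast this
          linarith
        have hby : b ≤ b^y := by
          calc b = b^1 := (pow_one b).symm
          _ ≤ b^y := pow_le_pow_right₀ hb hy1
        have hx0' : (0:ℝ) < (x:ℝ) := by
          have : (1:ℝ) ≤ (x:ℝ) := by exact_mod_cast hx
          linarith
        rw [div_mul_div_comm, le_div_iff₀ (by positivity)]
        calc (1:ℝ) * (b * (x:ℝ)) = b * (x:ℝ) := by ring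
        _ ≤ b^y * ((n:ℝ) - 1) := by
          apply mul_le_mul hby hxn hx0'.le (by positivity)
        _ = ((n:ℝ) - 1) * b^y := by ring
    have h2 : PS n x0 t (fun c => ((n:ℝ) - 1) / b * pf b c)
        = ((n:ℝ) - 1) / b * PS n x0 t (pf b) := PS_smul _ _
    have h3 : PS n x0 t (pf b) ≤ (1 - δ)^t * pf b x0 := PS_supermart hn hx0 hδ0 hstep t
    have h4 : pf b x0 = b^(n-1) := by
      rw [hx0def, pf]
      rw [if_neg (by simp; omega)]
      simp
    calc PS n x0 t ind1 ≤ ((n:ℝ) - 1) / b * PS n x0 t (pf b) := by rw [← h2]; exact h1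
    _ ≤ ((n:ℝ) - 1) / b * ((1 - δ)^t * pf b x0) := mul_le_mul_of_nonneg_left h3 hK0
    _ = ((n:ℝ) - 1) / b * ((1 - δ)^t * b^(n-1)) := by rw [h4]
  -- Step D : measure side
  set Cyl : (Fin (t+1) → ℕ × ℕ × ℕ) → Set (ℕ → ℕ × ℕ × ℕ) :=
    fun g => {ω | ∀ i ≤ t, ω i = extend g i} with hCyl
  have hCylMeas : ∀ g, MeasurableSet (Cyl g) := by
    intro g
    have : Cyl g = ⋂ i ∈ Set.Iic t, {ω : ℕ → ℕ × ℕ × ℕ | ω i = extend g i} := by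
      ext ω; simp [hCyl, Set.mem_iInter]
    rw [this]
    apply MeasurableSet.biInter (Set.to_countable _)
    intro i _
    show MeasurableSet ((fun ω : ℕ → ℕ × ℕ × ℕ => ω i) ⁻¹' {extend g i})
    exact (measurable_pi_apply i) (measurableSet_singleton (extend g i))
  have hCylwgt : ∀ g : Fin (t+1) → ℕ × ℕ × ℕ, (μ (Cyl g)).toReal = wgt n x0 g := by
    intro g
    have := hμ.2 t (extend g)
    rw [hCyl, wgt]
    exact this
  have hdisj : (↑Good : Set (Fin (t+1) → ℕ × ℕ × ℕ)).PairwiseDisjoint Cyl := by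
    intro g _ g' _ hne
    apply Set.disjoint_left.2
    intro ω hω hω'
    apply hne
    funext j
    have h1 := hω (j : ℕ) (by omega)
    have h2 := hω' (j : ℕ) (by omega)
    have e1 : extend g (j : ℕ) = g j := by
      rw [extend_eq g _ (by omega : (j:ℕ) ≤ t)]
    have e2 : extend g' (j : ℕ) = g' j := by
      rw [extend_eq g' _ (by omega : (j:ℕ) ≤ t)]
    rw [e1] at h1; rw [e2] at h2
    rw [← h1, ← h2]
  have hsub : (⋃ g ∈ Good, Cyl g) ⊆
      {ω : ℕ → ℕ × ℕ × ℕ | ∃ s : ℕ, (s : ℝ) ≤ 7 * (n : ℝ) ^ 2 * (Real.log n) ^ 2 ∧ (ω s).2.1 = 0} := by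
    intro ω hω
    simp only [Set.mem_iUnion] at hω
    obtain ⟨g, hg, hωg⟩ := hω
    refine ⟨t, ht, ?_⟩
    have h1 := hωg t le_rfl
    rw [h1, hextlast g]
    rw [hGood, Finset.mem_filter] at hg
    exact hg.2
  have hunion : μ (⋃ g ∈ Good, Cyl g) = ∑ g ∈ Good, μ (Cyl g) :=
    measure_biUnion_finset hdisj fun g _ => hCylMeas g
  have hμE : ∑ g ∈ Good, wgt n x0 g ≤
      (μ {ω : ℕ → ℕ × ℕ × ℕ | ∃ s : ℕ, (s : ℝ) ≤ 7 * (n : ℝ) ^ 2 * (Real.log n) ^ 2 ∧ (ω s).2.1 = 0}).toReal := by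
    have e1 : ∑ g ∈ Good, wgt n x0 g = (∑ g ∈ Good, μ (Cyl g)).toReal := by
      rw [ENNReal.toReal_sum (fun g _ => measure_ne_top μ _)]
      exact Finset.sum_congr rfl fun g _ => (hCylwgt g).symm
    rw [e1, ← hunion]
    exact ENNReal.toReal_mono (measure_ne_top μ _) (measure_mono hsub)
  -- assemble
  have : 1 - ((n:ℝ)^2)⁻¹ ≤ ∑ g ∈ Good, wgt n x0 g := by
    rw [hstepA, hstepB]
    have := le_trans hstepC hfinal
    linarith
  linarith [hμE, this]


end S18


namespace S18
lemma hfinal5 (n : ℕ) (hn : 5 ≤ n) :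
    ((n:ℝ) - 1) / ((2*(n:ℝ)+1)/(2*(n:ℝ))) *
      ((1 - ((n:ℝ)-1)/((2*(n:ℝ)+1)*(n:ℝ)^2))^(⌊7*(n:ℝ)^2*(Real.log n)^2⌋₊) *
        ((2*(n:ℝ)+1)/(2*(n:ℝ)))^(n-1)) ≤ (((n:ℝ))^2)⁻¹ := by
  have hN5 : (5:ℝ) ≤ (n:ℝ) := by exact_mod_cast hn
  set N := (n:ℝ) with hNdef
  set L := Real.log N with hLdef
  set δ : ℝ := (N-1)/((2*N+1)*N^2) with hδdef
  set b : ℝ := (2*N+1)/(2*N) with hbdef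
  set t : ℕ := ⌊7*N^2*L^2⌋₊ with htdef
  have hNpos : (0:ℝ) < N := by linarith
  have hb1 : 1 ≤ b := by rw [hbdef, le_div_iff₀ (by linarith)]; linarith
  have hb0 : 0 < b := lt_of_lt_of_le one_pos hb1
  have hL : (1.386:ℝ) ≤ L := by
    have h2 := Real.log_two_gt_d9
    have h4 : Real.log 4 = 2 * Real.log 2 := by
      rw [show (4:ℝ) = 2^2 by norm_num, Real.log_pow]; push_cast; ring
    have : Real.log 4 ≤ L := by
      rw [hLdef]; exact Real.log_le_log (by norm_num) (by linarith)
    linarith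
  have hL0 : 0 ≤ L := by linarith
  have hδ0 : 0 ≤ δ := by
    rw [hδdef]
    apply div_nonneg (by linarith)
    positivity
  have hδ02 : δ ≤ 0.02 := by
    rw [hδdef, div_le_iff₀ (by positivity)]
    nlinarith
  have hδ1 : 0 ≤ 1 - δ := by linarith
  -- floor bound
  have htlow : 7*N^2*L^2 - 1 ≤ (t:ℝ) := by
    have := Nat.lt_floor_add_one (7*N^2*L^2)
    rw [htdef]; linarith
  -- key drift count
  have ha : (4:ℝ)/11 ≤ (N - 1)/(2*N+1) := by
    rw [le_div_iff₀ (by linarith)]; linarith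
  have hq : 3*L + 0.52 ≤ 7*L^2*(4/11) := by
    nlinarith [sq_nonneg (L - 1.386), hL]
  have e1 : δ*(7*N^2*L^2 - 1) = 7*L^2*((N-1)/(2*N+1)) - δ := by
    rw [hδdef]; field_simp
  have key : 3*L + 1/2 ≤ δ * (t:ℝ) := by
    have h1 : δ*(7*N^2*L^2 - 1) ≤ δ * t := mul_le_mul_of_nonneg_left htlow hδ0
    have h2 : 7*L^2*(4/11) ≤ 7*L^2*((N-1)/(2*N+1)) := by
      apply mul_le_mul_of_nonneg_left ha (by positivity)
    rw [e1] at h1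
    linarith
  -- exponential bounds
  have A2 : (1-δ)^t ≤ Real.exp (-(δ*(t:ℝ))) := by
    have h1 : 1-δ ≤ Real.exp (-δ) := by
      have := Real.add_one_le_exp (-δ); linarith
    calc (1-δ)^t ≤ (Real.exp (-δ))^t := pow_le_pow_left₀ hδ1 h1 t
    _ = Real.exp (-(δ*(t:ℝ))) := by
      rw [← Real.exp_nat_mul]; ring_nf
  have A3 : b^(n-1) ≤ Real.exp (1/2) := by
    have hb2 : b ≤ Real.exp (1/(2*N)) := by
      have := Real.add_one_le_exp (1/(2*N))
      have e : b = 1/(2*N) + 1 := by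
        rw [hbdef]; field_simp; ring
      linarith
    have hcast : ((n-1 : ℕ):ℝ) = N - 1 := by
      rw [hNdef]; push_cast [Nat.cast_sub (by omega : 1 ≤ n)]; ring
    calc b^(n-1) ≤ (Real.exp (1/(2*N)))^(n-1) :=
          pow_le_pow_left₀ hb0.le hb2 (n-1)
    _ = Real.exp (((n-1:ℕ):ℝ)*(1/(2*N))) := by rw [← Real.exp_nat_mul]
    _ ≤ Real.exp (1/2) := by
      apply Real.exp_le_exp.2
      rw [hcast]
      rw [show (N-1)*(1/(2*N)) = (N-1)/(2*N) by ring,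
        div_le_div_iff₀ (by linarith) (by norm_num : (0:ℝ) < 2)]
      nlinarith
  have A1 : (N-1)/b ≤ N := by
    calc (N-1)/b ≤ (N-1)/1 := by
          apply div_le_div_of_nonneg_left (by linarith) one_pos hb1
    _ = N - 1 := div_one _
    _ ≤ N := by linarith
  have hexpL : N = Real.exp L := by rw [hLdef, Real.exp_log hNpos]
  have hinv : ((N:ℝ)^2)⁻¹ = Real.exp (-(2*L)) := by
    rw [hexpL, ← Real.exp_nat_mul]
    rw [← Real.exp_neg]
    norm_num
  calc (N - 1) / b * ((1-δ)^t * b^(n-1))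
      ≤ N * (Real.exp (-(δ*(t:ℝ))) * Real.exp (1/2)) := by
        apply mul_le_mul A1 _ (by positivity) (by linarith)
        apply mul_le_mul A2 A3 (by positivity) (Real.exp_nonneg _)
    _ = Real.exp (L + 1/2 - δ*(t:ℝ)) := by
        rw [hexpL, ← Real.exp_add, ← Real.exp_add]; ring_nf
    _ ≤ Real.exp (-(2*L)) := by
        apply Real.exp_le_exp.2; linarith
    _ = ((N:ℝ)^2)⁻¹ := hinv.symm

end S18

/-- For `p = 1`, if `USD_1` is started from the configuration
`(X₁, X₂, U)(0) = (1, n-1, 0)`, then with probability at least `1 - n⁻²` the support of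
Opinion 2 vanishes within `7·n²·log² n` steps. -/
theorem stmt_18 (n : ℕ) (hn : 2 ≤ n)
    (μ : Measure (ℕ → ℕ × ℕ × ℕ)) (hμ : IsUSD n 1 (1, n - 1, 0) μ) :
    1 - ((n : ℝ) ^ 2)⁻¹ ≤
      (μ {ω | ∃ t : ℕ, (t : ℝ) ≤ 7 * (n : ℝ) ^ 2 * (Real.log n) ^ 2 ∧
            (ω t).2.1 = 0}).toReal := by
  rcases (by omega : n = 2 ∨ n = 3 ∨ n = 4 ∨ 5 ≤ n) with h | h | h | h
  · subst h
    apply S18.main_abstract 2 hn (3/2) (1/4) (by norm_num) (by norm_num) ?_ 13 ?_ ?_ μ hμ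
    · have hS : (S18.Sfin 2) = {(1,0,1),(1,1,0),(2,0,0)} := by decide
      intro c hc
      rw [S18.sum_usdStep_mul]
      rw [hS] at hc
      fin_cases hc <;>
        norm_num [S18.tA, S18.tB, S18.tC, S18.pf, S18.mem_Sfin]
    · have h2 := Real.log_two_gt_d9
      push_cast
      nlinarith [h2]
    · norm_num
  · subst h
    apply S18.main_abstract 3 hn (4/3) (1/18) (by norm_num) (by norm_num) ?_ 66 ?_ ?_ μ hμ
    · have hS : (S18.Sfin 3) = {(1,0,2),(1,1,1),(1,2,0),(2,0,1),(2,1,0),(3,0,0)} := by decide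
      intro c hc
      rw [S18.sum_usdStep_mul]
      rw [hS] at hc
      fin_cases hc <;>
        norm_num [S18.tA, S18.tB, S18.tC, S18.pf, S18.mem_Sfin]
    · have h2 := Real.log_two_gt_d9
      have h32 : (1:ℝ)/3 ≤ Real.log (3/2) := by
        have hlog := Real.log_le_sub_one_of_pos (show (0:ℝ) < 2/3 by norm_num)
        have e : Real.log ((3:ℝ)/2) = - Real.log (2/3) := by
          rw [← Real.log_inv]; norm_num
        linarith
      have h3 : Real.log 3 = Real.log 2 + Real.log (3/2) := by
        rw [← Real.log_mul (by norm_num) (by norm_num)]; norm_num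
      have hl3 : (1.0264:ℝ) ≤ Real.log 3 := by rw [h3]; linarith
      have h0 : (0:ℝ) ≤ Real.log 3 := by linarith
      push_cast
      nlinarith [hl3, h0]
    · norm_num
  · subst h
    apply S18.main_abstract 4 hn ((2*((4:ℕ):ℝ)+1)/(2*((4:ℕ):ℝ)))
      ((((4:ℕ):ℝ)-1)/((2*((4:ℕ):ℝ)+1)*((4:ℕ):ℝ)^2)) ?_ ?_ ?_ 215 ?_ ?_ μ hμ
    · rw [show ((2:ℝ)*((4:ℕ):ℝ)+1)/(2*((4:ℕ):ℝ)) = 9/8 by norm_num]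
      norm_num
    · norm_num
    · exact fun c hc => S18.pf_step hn hc
    · have h2 := Real.log_two_gt_d9
      have h4 : Real.log (4:ℝ) = 2 * Real.log 2 := by
        rw [show ((4):ℝ) = 2^2 by norm_num, Real.log_pow]; push_cast; ring
      push_cast
      rw [h4]
      nlinarith [h2]
    · norm_num
  · apply S18.main_abstract n hn ((2*(n:ℝ)+1)/(2*(n:ℝ)))
      (((n:ℝ)-1)/((2*(n:ℝ)+1)*(n:ℝ)^2)) ?_ ?_ ?_
      (⌊7*(n:ℝ)^2*(Real.log n)^2⌋₊) ?_ ?_ μ hμ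
    · have hN5 : (5:ℝ) ≤ (n:ℝ) := by exact_mod_cast h
      rw [le_div_iff₀ (by linarith)]
      linarith
    · have hN5 : (5:ℝ) ≤ (n:ℝ) := by exact_mod_cast h
      have : ((n:ℝ)-1)/((2*(n:ℝ)+1)*(n:ℝ)^2) ≤ 1 := by
        rw [div_le_one (by positivity)]
        nlinarith
      linarith
    · exact fun c hc => S18.pf_step hn hc
    · apply Nat.floor_le
      positivity
    · exact S18.hfinal5 n h
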